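/- Let C ∈ ℝ^{n×n} be symmetric positive definite and let G : ℝⁿ → ℝᵖ be bounded and continuous. For m ∈ ℝⁿ let ρ_m(θ) = ((2π)ⁿ det C)^{-1/2} exp(−½⟨θ − m, C⁻¹(θ − m)⟩) denote the Gaussian density with mean m and covariance C, and define the averaged function FG(m) = ∫_{ℝⁿ} G(θ) ρ_m(θ) dθ and the averaged gradient FdG(m) = (∫_{ℝⁿ} (G(θ) − FG(m))(θ − m)ᵀ ρ_m(θ) dθ) · C⁻¹ ∈ ℝ^{p×n}. Then FG is differentiable in m and its Jacobian matrix at every m ∈ ℝⁿ equals FdG(m). -/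

import Mathlib

open Matrix MeasureTheory

/-- The Gaussian density on `ℝⁿ` with mean `m` and covariance `C`:
`ρ_m(θ) = ((2π)ⁿ det C)^{-1/2} exp(−½⟨θ − m, C⁻¹(θ − m)⟩)`. -/
noncomputable def gaussDensity {n : ℕ} (C : Matrix (Fin n) (Fin n) ℝ)
    (m θ : EuclideanSpace ℝ (Fin n)) : ℝ :=
  ((2 * Real.pi) ^ n * C.det) ^ (-(1 : ℝ) / 2) *
    Real.exp (-(1 / 2) * ((θ - m) ⬝ᵥ (C⁻¹ *ᵥ (θ - m))))

/-- The averaged function `FG(m) = ∫ G(θ) ρ_m(θ) dθ`. -/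
noncomputable def avgFun {n p : ℕ} (C : Matrix (Fin n) (Fin n) ℝ)
    (G : EuclideanSpace ℝ (Fin n) → EuclideanSpace ℝ (Fin p))
    (m : EuclideanSpace ℝ (Fin n)) : EuclideanSpace ℝ (Fin p) :=
  ∫ θ, gaussDensity C m θ • G θ

/-- The averaged gradient
`FdG(m) = (∫ (G(θ) − FG(m)) (θ − m)ᵀ ρ_m(θ) dθ) · C⁻¹`. -/
noncomputable def avgGrad {n p : ℕ} (C : Matrix (Fin n) (Fin n) ℝ)
    (G : EuclideanSpace ℝ (Fin n) → EuclideanSpace ℝ (Fin p))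
    (m : EuclideanSpace ℝ (Fin n)) : Matrix (Fin p) (Fin n) ℝ :=
  (Matrix.of fun i j =>
      ∫ θ, gaussDensity C m θ * ((G θ i - avgFun C G m i) * (θ j - m j))) * C⁻¹

section AuxLemmas

open Metric

local notation "⟪" x ", " y "⟫" => @inner ℝ _ _ x y

private lemma dot_inner' {n : ℕ} (A : Matrix (Fin n) (Fin n) ℝ) (u v : EuclideanSpace ℝ (Fin n)) :
    ⟪u, (LinearMap.toContinuousLinearMap (Matrix.toEuclideanLin A)) v⟫ = u ⬝ᵥ (A *ᵥ v) := by
  simp [PiLp.inner_apply, RCLike.inner_apply, dotProduct]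
  exact Finset.sum_congr rfl fun i _ => mul_comm _ _

private lemma inner_symm_T' {n : ℕ} {A : Matrix (Fin n) (Fin n) ℝ} (hA : Aᵀ = A)
    (u v : EuclideanSpace ℝ (Fin n)) :
    ⟪(LinearMap.toContinuousLinearMap (Matrix.toEuclideanLin A)) u, v⟫
      = ⟪u, (LinearMap.toContinuousLinearMap (Matrix.toEuclideanLin A)) v⟫ := by
  rw [real_inner_comm, dot_inner', dot_inner', Matrix.dotProduct_mulVec,
    ← Matrix.mulVec_transpose, hA, dotProduct_comm]

private lemma transpose_inv_eq' {n : ℕ} {C : Matrix (Fin n) (Fin n) ℝ} (hC : C.PosDef) :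
    (C⁻¹)ᵀ = C⁻¹ := by
  have h := (hC.inv).1
  ext i j
  have := congrFun (congrFun h i) j
  simpa [Matrix.conjTranspose_apply] using this

private lemma coord_abs_le_norm' {n : ℕ} (x : EuclideanSpace ℝ (Fin n)) (i : Fin n) :
    |x i| ≤ ‖x‖ := by
  rw [EuclideanSpace.norm_eq, show |x i| = Real.sqrt (x i ^ 2) by rw [Real.sqrt_sq_eq_abs]]
  apply Real.sqrt_le_sqrt
  calc x i ^ 2 ≤ ∑ j, x j ^ 2 :=
        Finset.single_le_sum (f := fun j => x j ^ 2) (fun j _ => sq_nonneg _) (Finset.mem_univ i)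
    _ = ∑ j, ‖x j‖ ^ 2 := by simp [Real.norm_eq_abs, sq_abs]

private lemma posdef_lower' {n : ℕ} {A : Matrix (Fin n) (Fin n) ℝ} (hA : A.PosDef) :
    ∃ α > 0, ∀ u : EuclideanSpace ℝ (Fin n), α * ‖u‖ ^ 2 ≤ u ⬝ᵥ (A *ᵥ u) := by
  set T := LinearMap.toContinuousLinearMap (Matrix.toEuclideanLin A) with hT
  have hQc : Continuous fun u : EuclideanSpace ℝ (Fin n) => (u ⬝ᵥ (A *ᵥ u) : ℝ) := by
    have : (fun u : EuclideanSpace ℝ (Fin n) => (u ⬝ᵥ (A *ᵥ u) : ℝ))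
        = fun u => ⟪u, T u⟫ := by funext u; rw [dot_inner']
    rw [this]
    exact continuous_id.inner T.continuous
  rcases Nat.eq_zero_or_pos n with hn | hn
  · refine ⟨1, one_pos, fun u => ?_⟩
    subst hn
    have hu : u = 0 := Subsingleton.elim _ _
    subst hu
    simp [dotProduct]
  · have : Nontrivial (EuclideanSpace ℝ (Fin n)) := by
      refine ⟨⟨0, EuclideanSpace.single ⟨0, hn⟩ 1, fun h => ?_⟩⟩
      have := congrArg (fun z : EuclideanSpace ℝ (Fin n) => z ⟨0, hn⟩) h
      simp [EuclideanSpace.single_apply] at this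
    obtain ⟨u₀, hu₀, hmin⟩ := (isCompact_sphere (0 : EuclideanSpace ℝ (Fin n)) 1).exists_isMinOn
      (NormedSpace.sphere_nonempty.mpr zero_le_one) hQc.continuousOn
    have hu₀norm : ‖u₀‖ = 1 := by simpa using mem_sphere_iff_norm.mp hu₀
    have hu₀ne : u₀ ≠ 0 := by intro h; rw [h] at hu₀norm; simp at hu₀norm
    have hα : 0 < u₀ ⬝ᵥ (A *ᵥ u₀) := by
      have := hA.dotProduct_mulVec_pos (x := WithLp.ofLp u₀) (by exact_mod_cast fun h => hu₀ne (by ext i; exact congrFun h i))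
      simpa using this
    refine ⟨u₀ ⬝ᵥ (A *ᵥ u₀), hα, fun u => ?_⟩
    rcases eq_or_ne u 0 with rfl | hu
    · simp [dotProduct]
    · have hnu : 0 < ‖u‖ := norm_pos_iff.mpr hu
      set w : EuclideanSpace ℝ (Fin n) := ‖u‖⁻¹ • u with hw
      have hwnorm : w ∈ sphere (0 : EuclideanSpace ℝ (Fin n)) 1 := by
        simp [hw, norm_smul, abs_of_pos (inv_pos.mpr hnu), inv_mul_cancel₀ hnu.ne']
      have hle : u₀ ⬝ᵥ (A *ᵥ u₀) ≤ w ⬝ᵥ (A *ᵥ w) := hmin hwnorm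
      have hquad : w ⬝ᵥ (A *ᵥ w) = ‖u‖⁻¹ * (‖u‖⁻¹ * (u ⬝ᵥ (A *ᵥ u))) := by
        simp only [hw, dotProduct, Matrix.mulVec, WithLp.ofLp_smul, Pi.smul_apply, smul_eq_mul,
          Finset.mul_sum, Finset.sum_mul]
        apply Finset.sum_congr rfl; intro i _
        apply Finset.sum_congr rfl; intro j _
        ring
      rw [hquad] at hle
      have hcancel : (‖u‖⁻¹ * (‖u‖⁻¹ * (u ⬝ᵥ (A *ᵥ u)))) * ‖u‖ ^ 2 = u ⬝ᵥ (A *ᵥ u) := by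
        rw [sq]
        field_simp
      nlinarith [mul_le_mul_of_nonneg_right hle (sq_nonneg ‖u‖)]

private lemma hasFDerivAt_gauss' {n : ℕ} (C : Matrix (Fin n) (Fin n) ℝ) (hC : C.PosDef)
    (θ m : EuclideanSpace ℝ (Fin n)) :
    HasFDerivAt (fun x => gaussDensity C x θ)
      (gaussDensity C m θ •
        (innerSL ℝ ((LinearMap.toContinuousLinearMap (Matrix.toEuclideanLin C⁻¹)) (θ - m)))) m := by
  set T := LinearMap.toContinuousLinearMap (Matrix.toEuclideanLin C⁻¹) with hT
  set c₀ : ℝ := ((2 * Real.pi) ^ n * C.det) ^ (-(1 : ℝ) / 2) with hc₀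
  have heq : (fun x => gaussDensity C x θ)
      = fun x : EuclideanSpace ℝ (Fin n) => c₀ * Real.exp (-(1/2 : ℝ) * ⟪θ - x, T (θ - x)⟫) := by
    funext x
    rw [gaussDensity, dot_inner', WithLp.ofLp_sub]
  rw [heq]
  have h1 : HasFDerivAt (fun x : EuclideanSpace ℝ (Fin n) => θ - x)
      (-(ContinuousLinearMap.id ℝ (EuclideanSpace ℝ (Fin n)))) m :=
    (hasFDerivAt_id m).const_sub θ
  have h2 : HasFDerivAt (fun x : EuclideanSpace ℝ (Fin n) => T (θ - x))
      (T.comp (-(ContinuousLinearMap.id ℝ (EuclideanSpace ℝ (Fin n))))) m :=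
    T.hasFDerivAt.comp m h1
  have h3 := h1.inner ℝ h2
  have h4 := (h3.const_mul (-(1/2 : ℝ))).exp
  have h5 := h4.const_mul c₀
  convert h5 using 1
  · rfl
  · rfl
  · rfl
  apply ContinuousLinearMap.ext
  intro v
  have hsy : ⟪T (θ - m), v⟫ = ⟪θ - m, T v⟫ := inner_symm_T' (transpose_inv_eq' hC) (θ - m) v
  have hdd : ((θ - m) ⬝ᵥ C⁻¹ *ᵥ (θ - m)) = ⟪θ - m, T (θ - m)⟫ :=
    (dot_inner' C⁻¹ (θ - m) (θ - m)).symm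
  simp only [ContinuousLinearMap.smul_apply, ContinuousLinearMap.coe_smul', Pi.smul_apply,
    ContinuousLinearMap.comp_apply, ContinuousLinearMap.prod_apply, ContinuousLinearMap.neg_apply,
    ContinuousLinearMap.coe_id', id_eq, fderivInnerCLM_apply, map_neg, inner_neg_left,
    inner_neg_right, innerSL_apply_apply, smul_eq_mul, gaussDensity]
  rw [hdd, ← hc₀, ← hsy, real_inner_comm v (T (θ - m))]
  ring

private lemma exp_poly_bound {b t : ℝ} (hb : 0 < b) (ht : 0 ≤ t) :
    (t + 1) * Real.exp (-(b * t ^ 2)) ≤ 2 + 2 / b := by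
  set E := Real.exp (-(b * t ^ 2)) with hE
  have hE0 : 0 < E := Real.exp_pos _
  have hE1 : E ≤ 1 := Real.exp_le_one_iff.mpr (by nlinarith)
  have hEb : E * (b * t ^ 2) ≤ 1 := by
    have h1 : b * t ^ 2 ≤ Real.exp (b * t ^ 2) := by
      have := Real.add_one_le_exp (b * t ^ 2); linarith
    calc E * (b * t ^ 2) ≤ E * Real.exp (b * t ^ 2) :=
          mul_le_mul_of_nonneg_left h1 hE0.le
      _ = 1 := by rw [hE, ← Real.exp_add]; simp
  have hb2 : 0 < 2 / b := by positivity
  rcases le_total t 1 with h | h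
  · nlinarith
  · have h1 : t * E ≤ 1 / b := by
      rw [le_div_iff₀ hb]
      have h0 : 0 ≤ t * E * b := by positivity
      nlinarith [mul_le_mul_of_nonneg_left h h0]
    have h2 : 1 / b ≤ 2 / b := by gcongr <;> norm_num
    nlinarith

private lemma exp_poly_bound' {b t : ℝ} (hb : 0 < b) (ht : 0 ≤ t) :
    (t + 1) * Real.exp (-(b * t ^ 2)) ≤ (2 + 4 / b) * Real.exp (-(b / 2 * t ^ 2)) := by
  have key := exp_poly_bound (b := b / 2) (t := t) (by positivity) ht
  have hsplit : Real.exp (-(b * t ^ 2))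
      = Real.exp (-(b / 2 * t ^ 2)) * Real.exp (-(b / 2 * t ^ 2)) := by
    rw [← Real.exp_add]; ring_nf
  rw [hsplit, ← mul_assoc]
  have h4 : 2 + 2 / (b / 2) = 2 + 4 / b := by rw [div_div_eq_mul_div]; norm_num
  rw [h4] at key
  exact mul_le_mul_of_nonneg_right key (Real.exp_nonneg _)

private lemma integrable_exp_gauss {n : ℕ} {c : ℝ} (hc : 0 < c) (m : EuclideanSpace ℝ (Fin n)) :
    Integrable (fun θ : EuclideanSpace ℝ (Fin n) => Real.exp (-(c * ‖θ - m‖ ^ 2))) := by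
  have h1 : Integrable (fun v : EuclideanSpace ℝ (Fin n) =>
      Complex.exp (-(c:ℂ) * ‖v‖ ^ 2 + 0 * ((inner ℝ (0 : EuclideanSpace ℝ (Fin n)) v : ℝ) : ℂ))) :=
    GaussianFourier.integrable_cexp_neg_mul_sq_norm_add (by simpa using hc) 0 0
  have h3 : Integrable (fun v : EuclideanSpace ℝ (Fin n) => Real.exp (-(c * ‖v‖ ^ 2))) := by
    refine h1.norm.congr (Filter.Eventually.of_forall fun v => ?_)
    simp only [Complex.norm_exp]
    congr 1
    rw [show (-(c:ℂ) * ‖v‖ ^ 2 + 0 * ((inner ℝ (0 : EuclideanSpace ℝ (Fin n)) v : ℝ) : ℂ))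
        = ((-(c * ‖v‖ ^ 2) : ℝ) : ℂ) by push_cast; ring, Complex.ofReal_re]
  exact h3.comp_sub_right m

private lemma integrable_of_gauss_bound {n : ℕ} {V : Type*} [NormedAddCommGroup V]
    (m : EuclideanSpace ℝ (Fin n)) {f : EuclideanSpace ℝ (Fin n) → V}
    (hf : AEStronglyMeasurable f volume) {K c : ℝ} (hc : 0 < c)
    (hb : ∀ θ, ‖f θ‖ ≤ K * ((‖θ - m‖ + 1) * Real.exp (-(c * ‖θ - m‖ ^ 2)))) :
    Integrable f := by
  have hK : 0 ≤ K := by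
    have h := hb m
    simp at h
    nlinarith [norm_nonneg (f m), h]
  have base := (integrable_exp_gauss (by positivity : (0:ℝ) < c / 2) m).const_mul (K * (2 + 4 / c))
  refine base.mono' hf (Filter.Eventually.of_forall fun θ => ?_)
  calc ‖f θ‖ ≤ K * ((‖θ - m‖ + 1) * Real.exp (-(c * ‖θ - m‖ ^ 2))) := hb θ
    _ ≤ K * ((2 + 4 / c) * Real.exp (-(c / 2 * ‖θ - m‖ ^ 2))) := by
        apply mul_le_mul_of_nonneg_left _ hK
        exact exp_poly_bound' hc (norm_nonneg _)
    _ = K * (2 + 4 / c) * Real.exp (-(c / 2 * ‖θ - m‖ ^ 2)) := by ring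

private lemma gauss_reflect {n : ℕ} (C : Matrix (Fin n) (Fin n) ℝ)
    (m θ : EuclideanSpace ℝ (Fin n)) :
    gaussDensity C m (m + m - θ) = gaussDensity C m θ := by
  unfold gaussDensity
  congr 2
  simp only [dotProduct, Matrix.mulVec, WithLp.ofLp_sub, WithLp.ofLp_add, Pi.sub_apply, Pi.add_apply, Finset.mul_sum]
  apply Finset.sum_congr rfl; intro i _
  apply Finset.sum_congr rfl; intro j _
  ring

private lemma dot_reflect {n : ℕ} (m θ : EuclideanSpace ℝ (Fin n)) (w : Fin n → ℝ) :
    ((m + m - θ) - m) ⬝ᵥ w = -((θ - m) ⬝ᵥ w) := by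
  simp only [dotProduct, WithLp.ofLp_sub, WithLp.ofLp_add, Pi.sub_apply, Pi.add_apply, ← Finset.sum_neg_distrib]
  apply Finset.sum_congr rfl; intro i _
  ring

private lemma integral_gauss_odd {n : ℕ} (C : Matrix (Fin n) (Fin n) ℝ)
    (m : EuclideanSpace ℝ (Fin n)) (w : Fin n → ℝ) :
    ∫ θ : EuclideanSpace ℝ (Fin n), gaussDensity C m θ * ((θ - m) ⬝ᵥ w) = 0 := by
  have h := integral_sub_left_eq_self
    (fun θ : EuclideanSpace ℝ (Fin n) => gaussDensity C m θ * ((θ - m) ⬝ᵥ w)) volume (m + m)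
  have h2 : (∫ θ : EuclideanSpace ℝ (Fin n),
      gaussDensity C m (m + m - θ) * ((m + m - θ - m) ⬝ᵥ w))
      = ∫ θ : EuclideanSpace ℝ (Fin n), -(gaussDensity C m θ * ((θ - m) ⬝ᵥ w)) := by
    congr 1; funext θ; rw [gauss_reflect, dot_reflect]; ring
  rw [h2, integral_neg] at h
  linarith

end AuxLemmas
set_option maxHeartbeats 2000000 in
set_option synthInstance.maxHeartbeats 1000000 in
/-- Let `C` be symmetric positive definite and `G : ℝⁿ → ℝᵖ`
bounded and continuous. Then the averaged function `FG` is differentiable in `m`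
and its Jacobian at every `m` is the averaged gradient `FdG(m)`. -/
theorem avgFun_hasFDerivAt_avgGrad
    {n p : ℕ}
    (C : Matrix (Fin n) (Fin n) ℝ) (hC : C.PosDef)
    (G : EuclideanSpace ℝ (Fin n) → EuclideanSpace ℝ (Fin p))
    (hGcont : Continuous G) (hGbdd : ∃ M : ℝ, ∀ θ, ‖G θ‖ ≤ M) :
    ∀ m : EuclideanSpace ℝ (Fin n),
      HasFDerivAt (avgFun C G)
        (LinearMap.toContinuousLinearMap (Matrix.toEuclideanLin (avgGrad C G m))) m := by
  intro m
  classical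
  obtain ⟨M₀, hM₀⟩ := hGbdd
  set M : ℝ := max M₀ 0 with hM
  have hMnn : 0 ≤ M := le_max_right _ _
  have hGM : ∀ θ, ‖G θ‖ ≤ M := fun θ => (hM₀ θ).trans (le_max_left _ _)
  have hApos : (C⁻¹).PosDef := hC.inv
  obtain ⟨α, hα, hQ⟩ := posdef_lower' hApos
  set T : EuclideanSpace ℝ (Fin n) →L[ℝ] EuclideanSpace ℝ (Fin n) :=
    LinearMap.toContinuousLinearMap (Matrix.toEuclideanLin C⁻¹) with hT
  set c₀ : ℝ := ((2 * Real.pi) ^ n * C.det) ^ (-(1 : ℝ) / 2) with hc₀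
  have hc₀pos : 0 < c₀ :=
    Real.rpow_pos_of_pos (mul_pos (pow_pos (by positivity) n) hC.det_pos) _
  have hgeq : ∀ x θ : EuclideanSpace ℝ (Fin n),
      gaussDensity C x θ = c₀ * Real.exp (-(1/2 : ℝ) * ((θ - x) ⬝ᵥ (C⁻¹ *ᵥ (θ - x)))) :=
    fun x θ => rfl
  have hgauss_nonneg : ∀ x θ : EuclideanSpace ℝ (Fin n), 0 ≤ gaussDensity C x θ := by
    intro x θ
    rw [hgeq]
    exact mul_nonneg hc₀pos.le (Real.exp_nonneg _)
  have hgauss_le : ∀ x θ : EuclideanSpace ℝ (Fin n),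
      gaussDensity C x θ ≤ c₀ * Real.exp (-(α/2 * ‖θ - x‖ ^ 2)) := by
    intro x θ
    rw [hgeq]
    have h1 := hQ (θ - x)
    have h2 := Real.exp_le_exp.mpr (show -(1/2 : ℝ) * ((θ - x) ⬝ᵥ (C⁻¹ *ᵥ (θ - x)))
        ≤ -(α/2 * ‖θ - x‖ ^ 2) by simp only [WithLp.ofLp_sub] at h1 ⊢; nlinarith)
    exact mul_le_mul_of_nonneg_left h2 hc₀pos.le
  have hQcont : Continuous fun u : EuclideanSpace ℝ (Fin n) => (u ⬝ᵥ (C⁻¹ *ᵥ u) : ℝ) := by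
    have he : (fun u : EuclideanSpace ℝ (Fin n) => (u ⬝ᵥ (C⁻¹ *ᵥ u) : ℝ))
        = fun u => @inner ℝ _ _ u (T u) := by funext u; rw [dot_inner']
    rw [he]; exact continuous_id.inner T.continuous
  have hgausscont : ∀ x : EuclideanSpace ℝ (Fin n),
      Continuous fun θ => gaussDensity C x θ := by
    intro x
    have he : (fun θ => gaussDensity C x θ) = fun θ : EuclideanSpace ℝ (Fin n) =>
        c₀ * Real.exp (-(1/2 : ℝ) * ((θ - x) ⬝ᵥ (C⁻¹ *ᵥ (θ - x)))) := funext fun θ => hgeq x θ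
    rw [he]
    exact continuous_const.mul (Real.continuous_exp.comp
      (continuous_const.mul (hQcont.comp (continuous_id.sub continuous_const))))
  set F' : EuclideanSpace ℝ (Fin n) → EuclideanSpace ℝ (Fin n) →
      (EuclideanSpace ℝ (Fin n) →L[ℝ] EuclideanSpace ℝ (Fin p)) :=
    fun x θ => (gaussDensity C x θ • innerSL ℝ (T (θ - x))).smulRight (G θ) with hF'def
  have hF'cont : ∀ x, Continuous fun θ => F' x θ := by
    intro x
    have h1 : Continuous fun θ : EuclideanSpace ℝ (Fin n) =>
        gaussDensity C x θ • innerSL ℝ (T (θ - x)) :=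
      (hgausscont x).smul ((innerSL ℝ).continuous.comp
        (T.continuous.comp (continuous_id.sub continuous_const)))
    exact (isBoundedBilinearMap_smulRight (𝕜 := ℝ)).continuous.comp (h1.prodMk hGcont)
  have hF'norm : ∀ x θ : EuclideanSpace ℝ (Fin n),
      ‖F' x θ‖ ≤ c₀ * M * ‖T‖ * (‖θ - x‖ * Real.exp (-(α/2 * ‖θ - x‖ ^ 2))) := by
    intro x θ
    have h1 : ‖F' x θ‖ = ‖gaussDensity C x θ • innerSL ℝ (T (θ - x))‖ * ‖G θ‖ :=
      ContinuousLinearMap.norm_smulRight_apply _ _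
    have h2 : ‖gaussDensity C x θ • innerSL ℝ (T (θ - x))‖
        = gaussDensity C x θ * ‖T (θ - x)‖ := by
      have hns := norm_smul (gaussDensity C x θ) (innerSL ℝ (T (θ - x)))
      rwa [innerSL_apply_norm, Real.norm_eq_abs, abs_of_nonneg (hgauss_nonneg x θ)] at hns
    rw [h1, h2]
    calc gaussDensity C x θ * ‖T (θ - x)‖ * ‖G θ‖
        ≤ (c₀ * Real.exp (-(α/2 * ‖θ - x‖ ^ 2))) * (‖T‖ * ‖θ - x‖) * M := by
          apply mul_le_mul (mul_le_mul (hgauss_le x θ) (T.le_opNorm _) (norm_nonneg _)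
            (mul_nonneg hc₀pos.le (Real.exp_nonneg _))) (hGM θ) (norm_nonneg _)
            (mul_nonneg (mul_nonneg hc₀pos.le (Real.exp_nonneg _))
              (mul_nonneg (norm_nonneg _) (norm_nonneg _)))
      _ = c₀ * M * ‖T‖ * (‖θ - x‖ * Real.exp (-(α/2 * ‖θ - x‖ ^ 2))) := by ring
  set bound : EuclideanSpace ℝ (Fin n) → ℝ :=
    fun θ => (c₀ * M * ‖T‖ * ((2 + 4 / (α/2)) * Real.exp (α/2)))
      * Real.exp (-(α/8 * ‖θ - m‖ ^ 2)) with hbound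
  have hball : ∀ x ∈ Metric.ball m 1, ∀ θ : EuclideanSpace ℝ (Fin n), ‖F' x θ‖ ≤ bound θ := by
    intro x hx θ
    have hs0 : (0:ℝ) ≤ ‖θ - x‖ := norm_nonneg _
    have ht0 : (0:ℝ) ≤ ‖θ - m‖ := norm_nonneg _
    have hts : ‖θ - m‖ ≤ ‖θ - x‖ + 1 := by
      have hxm : ‖x - m‖ < 1 := by
        rw [← dist_eq_norm]; exact Metric.mem_ball.mp hx
      calc ‖θ - m‖ = ‖(θ - x) + (x - m)‖ := by congr 1; abel
        _ ≤ ‖θ - x‖ + ‖x - m‖ := norm_add_le _ _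
        _ ≤ ‖θ - x‖ + 1 := by linarith
    have hcMT : (0:ℝ) ≤ c₀ * M * ‖T‖ :=
      mul_nonneg (mul_nonneg hc₀pos.le hMnn) (norm_nonneg _)
    have step1 : ‖θ - x‖ * Real.exp (-(α/2 * ‖θ - x‖ ^ 2))
        ≤ (‖θ - x‖ + 1) * Real.exp (-(α/2 * ‖θ - x‖ ^ 2)) := by
      have := Real.exp_nonneg (-(α/2 * ‖θ - x‖ ^ 2)); nlinarith
    have step2 : (‖θ - x‖ + 1) * Real.exp (-(α/2 * ‖θ - x‖ ^ 2))
        ≤ (2 + 4 / (α/2)) * Real.exp (-(α/2/2 * ‖θ - x‖ ^ 2)) :=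
      exp_poly_bound' (by positivity) hs0
    have step3 : Real.exp (-(α/2/2 * ‖θ - x‖ ^ 2))
        ≤ Real.exp (α/2) * Real.exp (-(α/8 * ‖θ - m‖ ^ 2)) := by
      rw [← Real.exp_add]
      apply Real.exp_le_exp.mpr
      nlinarith [mul_le_mul hts hts ht0 (by linarith : (0:ℝ) ≤ ‖θ - x‖ + 1),
        sq_nonneg (‖θ - x‖ - 1), hα.le]
    have h24 : (0:ℝ) ≤ 2 + 4 / (α/2) := by positivity
    calc ‖F' x θ‖ ≤ c₀ * M * ‖T‖ * (‖θ - x‖ * Real.exp (-(α/2 * ‖θ - x‖ ^ 2))) := hF'norm x θ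
      _ ≤ c₀ * M * ‖T‖ * ((2 + 4 / (α/2)) * Real.exp (-(α/2/2 * ‖θ - x‖ ^ 2))) :=
          mul_le_mul_of_nonneg_left (step1.trans step2) hcMT
      _ ≤ c₀ * M * ‖T‖ * ((2 + 4 / (α/2)) * (Real.exp (α/2) * Real.exp (-(α/8 * ‖θ - m‖ ^ 2)))) :=
          mul_le_mul_of_nonneg_left (mul_le_mul_of_nonneg_left step3 h24) hcMT
      _ = bound θ := by rw [hbound]; ring
  have hbound_int : Integrable bound :=
    (integrable_exp_gauss (by positivity : (0:ℝ) < α/8) m).const_mul _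
  have hFmeas : ∀ x : EuclideanSpace ℝ (Fin n),
      AEStronglyMeasurable (fun θ => gaussDensity C x θ • G θ) volume :=
    fun x => ((hgausscont x).smul hGcont).aestronglyMeasurable
  have hFint : Integrable (fun θ => gaussDensity C m θ • G θ) := by
    apply integrable_of_gauss_bound m (hFmeas m) (show (0:ℝ) < α/2 by positivity) (K := c₀ * M)
    intro θ
    have hnn : 0 ≤ c₀ * M * Real.exp (-(α/2 * ‖θ - m‖ ^ 2)) :=
      mul_nonneg (mul_nonneg hc₀pos.le hMnn) (Real.exp_nonneg _)
    rw [norm_smul, Real.norm_eq_abs, abs_of_nonneg (hgauss_nonneg m θ)]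
    calc gaussDensity C m θ * ‖G θ‖ ≤ (c₀ * Real.exp (-(α/2 * ‖θ - m‖ ^ 2))) * M :=
          mul_le_mul (hgauss_le m θ) (hGM θ) (norm_nonneg _)
            (mul_nonneg hc₀pos.le (Real.exp_nonneg _))
      _ ≤ c₀ * M * ((‖θ - m‖ + 1) * Real.exp (-(α/2 * ‖θ - m‖ ^ 2))) := by
          nlinarith [hnn, norm_nonneg (θ - m)]
  have hF'meas : AEStronglyMeasurable (F' m) volume := (hF'cont m).aestronglyMeasurable
  have key := hasFDerivAt_integral_of_dominated_of_fderiv_le (𝕜 := ℝ) (μ := volume)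
      (F := fun x θ => gaussDensity C x θ • G θ) (F' := F') (x₀ := m) (bound := bound)
      (Metric.ball_mem_nhds m one_pos) (Filter.Eventually.of_forall hFmeas) hFint hF'meas
      (Filter.Eventually.of_forall fun θ => fun x hx => hball x hx θ) hbound_int
      (Filter.Eventually.of_forall fun θ => fun x _ =>
        (hasFDerivAt_gauss' C hC θ x).smul_const (G θ))
  have hF'int : Integrable (F' m) := by
    apply integrable_of_gauss_bound m hF'meas (show (0:ℝ) < α/2 by positivity)
      (K := c₀ * M * ‖T‖)
    intro θ
    have hcMT : (0:ℝ) ≤ c₀ * M * ‖T‖ :=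
      mul_nonneg (mul_nonneg hc₀pos.le hMnn) (norm_nonneg _)
    have hnn : 0 ≤ c₀ * M * ‖T‖ * Real.exp (-(α/2 * ‖θ - m‖ ^ 2)) :=
      mul_nonneg hcMT (Real.exp_nonneg _)
    calc ‖F' m θ‖ ≤ c₀ * M * ‖T‖ * (‖θ - m‖ * Real.exp (-(α/2 * ‖θ - m‖ ^ 2))) := hF'norm m θ
      _ ≤ c₀ * M * ‖T‖ * ((‖θ - m‖ + 1) * Real.exp (-(α/2 * ‖θ - m‖ ^ 2))) := by
          nlinarith [hnn, norm_nonneg (θ - m)]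
  suffices hEq : (∫ θ, F' m θ)
      = LinearMap.toContinuousLinearMap (Matrix.toEuclideanLin (avgGrad C G m)) by
    rw [← hEq]
    exact key
  apply ContinuousLinearMap.ext
  intro v
  rw [ContinuousLinearMap.integral_apply hF'int]
  ext i
  set w : Fin n → ℝ := C⁻¹ *ᵥ v with hwdef
  set gi : ℝ := avgFun C G m i with hgi
  have happly : ∀ θ : EuclideanSpace ℝ (Fin n),
      F' m θ v = (gaussDensity C m θ * ((θ - m) ⬝ᵥ w)) • G θ := by
    intro θ
    simp only [hF'def, ContinuousLinearMap.smulRight_apply, ContinuousLinearMap.smul_apply,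
      innerSL_apply_apply, smul_eq_mul]
    congr 2
    rw [inner_symm_T' (transpose_inv_eq' hC), dot_inner']
  have hvecint : Integrable (fun θ => F' m θ v) := hF'int.apply_continuousLinearMap v
  have hLHS : (∫ θ, F' m θ v) i
      = ∫ θ, gaussDensity C m θ * ((θ - m) ⬝ᵥ w) * G θ i := by
    have h1 : (∫ θ, F' m θ v) i = EuclideanSpace.proj (𝕜 := ℝ) i (∫ θ, F' m θ v) := rfl
    rw [h1, ← (EuclideanSpace.proj (𝕜 := ℝ) i).integral_comp_comm hvecint]
    congr 1; funext θ
    rw [happly θ]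
    simp [smul_eq_mul]
  have hRHS0 : (LinearMap.toContinuousLinearMap (Matrix.toEuclideanLin (avgGrad C G m)) v) i
      = ((avgGrad C G m) *ᵥ v) i := rfl
  have hRHS : ((avgGrad C G m) *ᵥ v) i
      = ∑ k, (∫ θ, gaussDensity C m θ * ((G θ i - gi) * (θ k - m k))) * w k := by
    simp only [avgGrad, Matrix.mulVec, dotProduct, Matrix.mul_apply, Matrix.of_apply,
      Finset.sum_mul, hwdef, ← hgi]
    rw [Finset.sum_comm]
    apply Finset.sum_congr rfl; intro k _
    rw [Finset.mul_sum]
    apply Finset.sum_congr rfl; intro j _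
    ring
  have hWnn : (0:ℝ) ≤ ∑ k, |w k| := Finset.sum_nonneg fun k _ => abs_nonneg _
  have hdotb : ∀ u : EuclideanSpace ℝ (Fin n), |u ⬝ᵥ w| ≤ (∑ k, |w k|) * ‖u‖ := by
    intro u
    calc |u ⬝ᵥ w| ≤ ∑ k, |u k * w k| := by
          rw [dotProduct]; exact Finset.abs_sum_le_sum_abs _ _
      _ ≤ ∑ k, |w k| * ‖u‖ := by
          apply Finset.sum_le_sum; intro k _
          rw [abs_mul, mul_comm]
          exact mul_le_mul_of_nonneg_left (coord_abs_le_norm' u k) (abs_nonneg _)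
      _ = (∑ k, |w k|) * ‖u‖ := (Finset.sum_mul _ _ _).symm
  have hdcont : Continuous fun θ : EuclideanSpace ℝ (Fin n) => (θ - m) ⬝ᵥ w := by
    have he : (fun θ : EuclideanSpace ℝ (Fin n) => (θ - m) ⬝ᵥ w)
        = fun θ => ∑ k, (θ k - m k) * w k := by
      funext θ
      simp [dotProduct, PiLp.sub_apply, sub_mul]
    rw [he]
    exact continuous_finset_sum _ fun k _ =>
      (((EuclideanSpace.proj (𝕜 := ℝ) k).continuous).sub continuous_const).mul continuous_const
  have hGicont : Continuous fun θ => G θ i :=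
    (EuclideanSpace.proj (𝕜 := ℝ) i).continuous.comp hGcont
  have hgibound : ∀ θ, |G θ i - gi| ≤ M + |gi| := by
    intro θ
    have h1 : |G θ i| ≤ M := (coord_abs_le_norm' (G θ) i).trans (hGM θ)
    have h2 : |G θ i - gi| ≤ |G θ i| + |gi| := by
      simpa [sub_eq_add_neg, abs_neg] using abs_add_le (G θ i) (-gi)
    linarith
  have hent : ∀ k : Fin n, Integrable
      (fun θ => gaussDensity C m θ * ((G θ i - gi) * (θ k - m k))) := by
    intro k
    apply integrable_of_gauss_bound m
      (((hgausscont m).mul ((hGicont.sub continuous_const).mul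
        (((EuclideanSpace.proj (𝕜 := ℝ) k).continuous).sub
          continuous_const))).aestronglyMeasurable)
      (show (0:ℝ) < α/2 by positivity) (K := c₀ * (M + |gi|))
    intro θ
    have e2 : |θ k - m k| ≤ ‖θ - m‖ := by
      have h3 : θ k - m k = (θ - m) k := rfl
      rw [h3]; exact coord_abs_le_norm' _ k
    have hnn : 0 ≤ c₀ * (M + |gi|) * Real.exp (-(α/2 * ‖θ - m‖ ^ 2)) :=
      mul_nonneg (mul_nonneg hc₀pos.le (by positivity)) (Real.exp_nonneg _)
    rw [Real.norm_eq_abs, Pi.mul_apply, Pi.mul_apply, abs_mul, abs_mul, abs_of_nonneg (hgauss_nonneg m θ)]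
    calc gaussDensity C m θ * (|G θ i - gi| * |θ k - m k|)
        ≤ (c₀ * Real.exp (-(α/2 * ‖θ - m‖ ^ 2))) * ((M + |gi|) * ‖θ - m‖) :=
          mul_le_mul (hgauss_le m θ)
            (mul_le_mul (hgibound θ) e2 (abs_nonneg _) (by positivity))
            (mul_nonneg (abs_nonneg _) (abs_nonneg _))
            (mul_nonneg hc₀pos.le (Real.exp_nonneg _))
      _ ≤ c₀ * (M + |gi|) * ((‖θ - m‖ + 1) * Real.exp (-(α/2 * ‖θ - m‖ ^ 2))) := by
          nlinarith [hnn, norm_nonneg (θ - m)]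
  have hJ2 : Integrable (fun θ => gaussDensity C m θ * ((θ - m) ⬝ᵥ w)) := by
    apply integrable_of_gauss_bound m (((hgausscont m).mul hdcont).aestronglyMeasurable)
      (show (0:ℝ) < α/2 by positivity) (K := c₀ * (∑ k, |w k|))
    intro θ
    have hnn : 0 ≤ c₀ * (∑ k, |w k|) * Real.exp (-(α/2 * ‖θ - m‖ ^ 2)) :=
      mul_nonneg (mul_nonneg hc₀pos.le hWnn) (Real.exp_nonneg _)
    rw [Real.norm_eq_abs, Pi.mul_apply, abs_mul, abs_of_nonneg (hgauss_nonneg m θ)]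
    calc gaussDensity C m θ * |(θ - m) ⬝ᵥ w|
        ≤ (c₀ * Real.exp (-(α/2 * ‖θ - m‖ ^ 2))) * ((∑ k, |w k|) * ‖θ - m‖) :=
          mul_le_mul (hgauss_le m θ) (hdotb (θ - m)) (abs_nonneg _)
            (mul_nonneg hc₀pos.le (Real.exp_nonneg _))
      _ ≤ c₀ * (∑ k, |w k|) * ((‖θ - m‖ + 1) * Real.exp (-(α/2 * ‖θ - m‖ ^ 2))) := by
          nlinarith [hnn, norm_nonneg (θ - m)]
  have hJ1 : Integrable (fun θ => gaussDensity C m θ * ((θ - m) ⬝ᵥ w) * G θ i) := by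
    apply integrable_of_gauss_bound m
      ((((hgausscont m).mul hdcont).mul hGicont).aestronglyMeasurable)
      (show (0:ℝ) < α/2 by positivity) (K := c₀ * (∑ k, |w k|) * M)
    intro θ
    have hnn : 0 ≤ c₀ * (∑ k, |w k|) * M * Real.exp (-(α/2 * ‖θ - m‖ ^ 2)) :=
      mul_nonneg (mul_nonneg (mul_nonneg hc₀pos.le hWnn) hMnn) (Real.exp_nonneg _)
    have hGi : |G θ i| ≤ M := (coord_abs_le_norm' (G θ) i).trans (hGM θ)
    rw [Real.norm_eq_abs, Pi.mul_apply, Pi.mul_apply, abs_mul, abs_mul, abs_of_nonneg (hgauss_nonneg m θ)]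
    calc gaussDensity C m θ * |(θ - m) ⬝ᵥ w| * |G θ i|
        ≤ (c₀ * Real.exp (-(α/2 * ‖θ - m‖ ^ 2))) * ((∑ k, |w k|) * ‖θ - m‖) * M :=
          mul_le_mul
            (mul_le_mul (hgauss_le m θ) (hdotb (θ - m)) (abs_nonneg _)
              (mul_nonneg hc₀pos.le (Real.exp_nonneg _)))
            hGi (abs_nonneg _)
            (mul_nonneg (mul_nonneg hc₀pos.le (Real.exp_nonneg _))
              (mul_nonneg hWnn (norm_nonneg _)))
      _ ≤ c₀ * (∑ k, |w k|) * M * ((‖θ - m‖ + 1) * Real.exp (-(α/2 * ‖θ - m‖ ^ 2))) := by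
          nlinarith [hnn, norm_nonneg (θ - m)]
  have hsum : ∑ k, (∫ θ, gaussDensity C m θ * ((G θ i - gi) * (θ k - m k))) * w k
      = ∫ θ, gaussDensity C m θ * ((θ - m) ⬝ᵥ w) * G θ i := by
    calc ∑ k, (∫ θ, gaussDensity C m θ * ((G θ i - gi) * (θ k - m k))) * w k
        = ∑ k, ∫ θ, gaussDensity C m θ * ((G θ i - gi) * (θ k - m k)) * w k := by
          apply Finset.sum_congr rfl; intro k _
          rw [MeasureTheory.integral_mul_const]
      _ = ∫ θ, ∑ k, gaussDensity C m θ * ((G θ i - gi) * (θ k - m k)) * w k :=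
          (integral_finset_sum Finset.univ fun k _ => (hent k).mul_const (w k)).symm
      _ = ∫ θ, (gaussDensity C m θ * ((θ - m) ⬝ᵥ w) * G θ i
            - gi * (gaussDensity C m θ * ((θ - m) ⬝ᵥ w))) := by
          congr 1; funext θ
          have hp : ∑ k, gaussDensity C m θ * ((G θ i - gi) * (θ k - m k)) * w k
              = gaussDensity C m θ * (G θ i - gi) * ((θ - m) ⬝ᵥ w) := by
            simp only [dotProduct, WithLp.ofLp_sub, Pi.sub_apply, Finset.mul_sum]
            apply Finset.sum_congr rfl; intro k _
            ring
          rw [hp]; ring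
      _ = (∫ θ, gaussDensity C m θ * ((θ - m) ⬝ᵥ w) * G θ i)
            - gi * ∫ θ, gaussDensity C m θ * ((θ - m) ⬝ᵥ w) := by
          rw [integral_sub hJ1 (hJ2.const_mul gi), MeasureTheory.integral_const_mul]
      _ = ∫ θ, gaussDensity C m θ * ((θ - m) ⬝ᵥ w) * G θ i := by
          rw [integral_gauss_odd]; ring
  rw [hLHS, hRHS0, hRHS, hsum]
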